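/- Let A be an m-dimensional abstract rigidity matroid on K(V). Then every set H = K(V₁) ∪ K(V₂) with V₁ ∪ V₂ = V, |V₁ ∩ V₂| = m−1, and V₁, V₂ incomparable under inclusion, is a hyperplane of A. -/

import Mathlib

open Matroid Set

/-- A circuit of a matroid: a minimal dependent set. -/
def Matroid.IsCircuit' {α : Type*} (M : Matroid α) (C : Set α) : Prop :=
  M.Dep C ∧ ∀ D, D ⊂ C → M.Indep D

/-- A cocircuit: a circuit of the dual matroid. -/
def Matroid.IsCocircuit' {α : Type*} (M : Matroid α) (C : Set α) : Prop :=
  M✶.IsCircuit' C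

/-- A hyperplane: a maximal subset of the ground set not containing a basis. -/
def Matroid.IsHyperplane {α : Type*} (M : Matroid α) (H : Set α) : Prop :=
  H ⊆ M.E ∧ (¬ ∃ B ⊆ H, M.IsBase B) ∧
    ∀ H', H ⊂ H' → H' ⊆ M.E → ∃ B ⊆ H', M.IsBase B

/-- The rank of a set: the size of a largest independent subset. -/
noncomputable def Matroid.rk {α : Type*} (M : Matroid α) (X : Set α) : ℕ :=
  sSup {n | ∃ I ⊆ X, M.Indep I ∧ I.ncard = n}

/-- `cK U` is the edge set of the complete graph on the vertex set `U`. -/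
def cK {V : Type*} (U : Set V) : Set (Sym2 V) :=
  {e | ¬ e.IsDiag ∧ ∀ v ∈ e, v ∈ U}

/-- The support (set of endpoints) of an edge set. -/
def supp {V : Type*} (E : Set (Sym2 V)) : Set V := {v | ∃ e ∈ E, v ∈ e}

/-- An edge set is rigid if its closure is the complete graph on its support. -/
def Rigid {V : Type*} (A : Matroid (Sym2 V)) (E : Set (Sym2 V)) : Prop :=
  A.closure E = cK (supp E)

/-- `A` is an `m`-dimensional abstract rigidity matroid on `K(W)`. -/
def IsARMOn {V : Type*} (m : ℕ) (W : Set V) (A : Matroid (Sym2 V)) : Prop :=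
  A.E = cK W ∧
  (∀ E F : Set (Sym2 V), E ⊆ cK W → F ⊆ cK W →
    (supp E ∩ supp F).ncard < m →
    A.closure (E ∪ F) ⊆ cK (supp E) ∪ cK (supp F)) ∧
  (∀ E F : Set (Sym2 V), E ⊆ cK W → F ⊆ cK W →
    Rigid A E → Rigid A F → m ≤ (supp E ∩ supp F).ncard →
    Rigid A (E ∪ F))

/-- The star of a vertex: all edges containing it. -/
def starv {V : Type*} (v : V) : Set (Sym2 V) := {e | ¬ e.IsDiag ∧ v ∈ e}

/-- `C` is a vertex star minus `m-1` edges. -/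
def IsStarMinus {V : Type*} (m : ℕ) (C : Set (Sym2 V)) : Prop :=
  ∃ v : V, ∃ D ⊆ starv v, D.ncard = m - 1 ∧ C = starv v \ D

/-- The valence (degree) of a vertex in an edge set. -/
noncomputable def valence {V : Type*} (C : Set (Sym2 V)) (v : V) : ℕ :=
  {e ∈ C | v ∈ e}.ncard

/-- `bigstar V' = K(V) \ K(V \ V')`. -/
def bigstar {V : Type*} (V' : Set V) : Set (Sym2 V) :=
  cK (univ : Set V) \ cK (V'ᶜ)

/-- The family `H_m(V)` of unions of two complete graphs covering `V` and
meeting in `m-1` vertices. -/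
def HmFam (m : ℕ) (V : Type*) : Set (Set (Sym2 V)) :=
  {H | ∃ V₁ V₂ : Set V, V₁ ∪ V₂ = univ ∧ (V₁ ∩ V₂).ncard = m - 1 ∧
    ¬ V₁ ⊆ V₂ ∧ ¬ V₂ ⊆ V₁ ∧ H = cK V₁ ∪ cK V₂}

/-- The family `H_m^{(1)}(K(X))` of sets `Δ_v^A` relative to a vertex set `X`. -/
def Hm1Fam {V : Type*} (m : ℕ) (X : Set V) : Set (Set (Sym2 V)) :=
  {H | ∃ v ∈ X, ∃ A ⊆ X \ {v}, A.ncard = m - 1 ∧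
    H = cK ({v} ∪ A) ∪ cK (X \ {v})}

lemma cK_mono {V : Type*} {U U' : Set V} (h : U ⊆ U') : cK U ⊆ cK U' :=
  fun e he => ⟨he.1, fun v hv => h (he.2 v hv)⟩

lemma supp_cK_subset {V : Type*} (U : Set V) : supp (cK U) ⊆ U := by
  rintro v ⟨e, he, hv⟩; exact he.2 v hv

lemma cK_supp_cK {V : Type*} (U : Set V) : cK (supp (cK U)) = cK U := by
  apply subset_antisymm (cK_mono (supp_cK_subset U))
  intro e he
  exact ⟨he.1, fun v hv => ⟨e, he, hv⟩⟩

lemma supp_union {V : Type*} (E F : Set (Sym2 V)) : supp (E ∪ F) = supp E ∪ supp F := by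
  ext v; constructor
  · rintro ⟨e, he | he, hv⟩
    · exact Or.inl ⟨e, he, hv⟩
    · exact Or.inr ⟨e, he, hv⟩
  · rintro (⟨e, he, hv⟩ | ⟨e, he, hv⟩) <;> exact ⟨e, by simp [he], hv⟩

lemma cK_empty {V : Type*} : cK (∅ : Set V) = ∅ := by
  ext e; simp only [cK, mem_setOf_eq, mem_empty_iff_false, iff_false, not_and]
  intro hd h
  obtain ⟨a, b⟩ := e
  exact h a (by simp)

lemma supp_empty {V : Type*} : supp (∅ : Set (Sym2 V)) = ∅ := by
  ext v; simp [supp]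

lemma supp_cK_eq {V : Type*} {U : Set V} (hU : U.Finite) (h : 2 ≤ U.ncard) :
    supp (cK U) = U := by
  apply subset_antisymm (supp_cK_subset U)
  intro v hv
  obtain ⟨a, b, ha, hb, hab⟩ := Set.one_lt_ncard_iff hU |>.1 h
  rcases eq_or_ne v a with rfl | hva
  · exact ⟨s(v, b), ⟨by simpa [Sym2.isDiag_iff_proj_eq] using hab, by
      intro x hx; rw [Sym2.mem_iff] at hx; rcases hx with rfl | rfl <;> assumption⟩, by simp⟩
  · exact ⟨s(v, a), ⟨by simpa [Sym2.isDiag_iff_proj_eq] using hva, by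
      intro x hx; rw [Sym2.mem_iff] at hx; rcases hx with rfl | rfl <;> assumption⟩, by simp⟩
section ARM
variable {V : Type*} [Fintype V] {m : ℕ} {A : Matroid (Sym2 V)}
  (hm : 0 < m) (hA : IsARMOn m (univ : Set V) A)

include hm hA

lemma closure_cK_eq (U : Set V) : A.closure (cK U) = cK U := by
  apply subset_antisymm
  · have h := hA.2.1 (cK U) ∅ (cK_mono (subset_univ U)) (empty_subset _)
      (by simp [supp_empty, hm])
    rw [union_empty, supp_empty, cK_empty, union_empty, cK_supp_cK] at h
    exact h
  · exact A.subset_closure (cK U) (hA.1 ▸ cK_mono (subset_univ U))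

lemma rigid_cK (U : Set V) : Rigid A (cK U) := by
  rw [Rigid, cK_supp_cK]; exact closure_cK_eq hm hA U

lemma closure_cK_union_small {U₁ U₂ : Set V} (h : (U₁ ∩ U₂).ncard < m) :
    A.closure (cK U₁ ∪ cK U₂) ⊆ cK U₁ ∪ cK U₂ := by
  have h' : (supp (cK U₁) ∩ supp (cK U₂)).ncard < m := by
    refine lt_of_le_of_lt (Set.ncard_le_ncard ?_ (Set.toFinite _)) h
    exact inter_subset_inter (supp_cK_subset _) (supp_cK_subset _)
  have := hA.2.1 (cK U₁) (cK U₂) (cK_mono (subset_univ _)) (cK_mono (subset_univ _)) h'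
  rwa [cK_supp_cK, cK_supp_cK] at this

lemma closure_cK_union_big {U₁ U₂ : Set V} (h1 : 2 ≤ U₁.ncard) (h2 : 2 ≤ U₂.ncard)
    (h : m ≤ (U₁ ∩ U₂).ncard) :
    A.closure (cK U₁ ∪ cK U₂) = cK (U₁ ∪ U₂) := by
  have hr := hA.2.2 (cK U₁) (cK U₂) (cK_mono (subset_univ _)) (cK_mono (subset_univ _))
    (rigid_cK hm hA U₁) (rigid_cK hm hA U₂)
    (by rwa [supp_cK_eq (Set.toFinite _) h1, supp_cK_eq (Set.toFinite _) h2])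
  rw [Rigid, supp_union, supp_cK_eq (Set.toFinite _) h1, supp_cK_eq (Set.toFinite _) h2] at hr
  exact hr

end ARM
lemma mk_mem_cK {V : Type*} {U : Set V} {a b : V} (hab : a ≠ b) (ha : a ∈ U) (hb : b ∈ U) :
    s(a, b) ∈ cK U := by
  refine ⟨by simpa [Sym2.mk_isDiag_iff] using hab, ?_⟩
  intro v hv; rw [Sym2.mem_iff] at hv; rcases hv with rfl | rfl <;> assumption

lemma cK_subsingleton {V : Type*} {U : Set V} (h : U.Subsingleton) : cK U = ∅ := by
  ext e
  simp only [mem_empty_iff_false, iff_false]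
  rintro ⟨hd, hin⟩
  obtain ⟨a, b⟩ := e
  exact hd (by simpa [Sym2.mk_isDiag_iff] using h (hin a (by simp)) (hin b (by simp)))

section ARM2
variable {V : Type*} [Fintype V] [DecidableEq V] {m : ℕ} {A : Matroid (Sym2 V)}

lemma spanning_extra (hm : 0 < m) (hA : IsARMOn m (univ : Set V) A)
    {V₁ V₂ : Set V} (hcover : V₁ ∪ V₂ = univ) (hint : (V₁ ∩ V₂).ncard = m - 1)
    {u w : V} (hu : u ∈ V₁ \ V₂) (hw : w ∈ V₂ \ V₁) :
    cK (univ : Set V) ⊆ A.closure (cK V₁ ∪ cK V₂ ∪ {s(u, w)}) := by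
  set V₀ := V₁ ∩ V₂ with hV₀
  have huw : u ≠ w := fun h => hu.2 (h ▸ hw.1)
  have huV₀ : u ∉ V₀ := fun h => hu.2 h.2
  have hwV₀ : w ∉ V₀ := fun h => hw.2 h.1
  set S : Set V := insert w (insert u V₀) with hS
  have hcard_uV₀ : (insert u V₀).ncard = m := by
    rw [Set.ncard_insert_of_notMem huV₀ (Set.toFinite _), hint]; omega
  have hwuV₀ : w ∉ insert u V₀ := by
    simp only [mem_insert_iff]; rintro (rfl | h); exact huw rfl; exact hwV₀ h
  have hcardS : S.ncard = m + 1 := by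
    rw [hS, Set.ncard_insert_of_notMem hwuV₀ (Set.toFinite _), hcard_uV₀]
  have hSsub : cK S ⊆ cK V₁ ∪ cK V₂ ∪ {s(u, w)} := by
    rintro e ⟨hd, hin⟩
    obtain ⟨a, b⟩ := e
    have hab : a ≠ b := by simpa [Sym2.mk_isDiag_iff] using hd
    have ha := hin a (by simp)
    have hb := hin b (by simp)
    simp only [hS, mem_insert_iff] at ha hb
    have hV₀1 : V₀ ⊆ V₁ := inter_subset_left
    have hV₀2 : V₀ ⊆ V₂ := inter_subset_right
    rcases ha with rfl | rfl | ha <;> rcases hb with rfl | rfl | hb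
    · exact absurd rfl hab
    · exact Or.inr (by rw [Sym2.eq_swap]; rfl)
    · exact Or.inl (Or.inr (mk_mem_cK hab hw.1 (hV₀2 hb)))
    · exact Or.inr rfl
    · exact absurd rfl hab
    · exact Or.inl (Or.inl (mk_mem_cK hab hu.1 (hV₀1 hb)))
    · exact Or.inl (Or.inr (mk_mem_cK hab (hV₀2 ha) hw.1))
    · exact Or.inl (Or.inl (mk_mem_cK hab (hV₀1 ha) hu.1))
    · exact Or.inl (Or.inl (mk_mem_cK hab (hV₀1 ha) (hV₀1 hb)))
  have huV₁ : insert u V₀ ⊆ V₁ := insert_subset hu.1 inter_subset_left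
  -- Step B
  have hB : cK (insert w V₁) ⊆ A.closure (cK V₁ ∪ cK S) := by
    by_cases h1 : 2 ≤ V₁.ncard
    · have hbig := closure_cK_union_big hm hA h1 (by omega : 2 ≤ S.ncard) ?_
      · rw [hbig]
        apply cK_mono
        intro x hx
        rcases hx with rfl | hx
        · exact Or.inr (by simp [hS])
        · exact Or.inl hx
      · calc m = (insert u V₀).ncard := hcard_uV₀.symm
          _ ≤ (V₁ ∩ S).ncard := Set.ncard_le_ncard
              (subset_inter huV₁ (by intro x hx; exact Or.inr hx)) (Set.toFinite _)
    · push_neg at h1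
      have hmle : m ≤ V₁.ncard := hcard_uV₀ ▸ Set.ncard_le_ncard huV₁ (Set.toFinite _)
      have hc1 : V₁.ncard = 1 := by omega
      obtain ⟨a, ha⟩ := Set.ncard_eq_one.mp hc1
      have : V₁ = {u} := by rw [ha]; have := hu.1; rw [ha] at this; simp_all
      have hsubS : insert w V₁ ⊆ S := by
        rw [this, hS]; intro x hx
        rcases hx with rfl | hx
        · exact Or.inl rfl
        · exact Or.inr (Or.inl hx)
      exact (cK_mono hsubS).trans <| (subset_union_right).trans <|
        A.subset_closure _ (union_subset (hA.1 ▸ cK_mono (subset_univ _)) (hA.1 ▸ cK_mono (subset_univ _)))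
  -- Step C
  have hC : cK (univ : Set V) ⊆ A.closure (cK (insert w V₁) ∪ cK V₂) := by
    by_cases h2 : 2 ≤ V₂.ncard
    · have hW2 : 2 ≤ (insert w V₁).ncard := by
        exact (Set.one_lt_ncard_iff (Set.toFinite _)).2 ⟨w, u, Or.inl rfl, Or.inr hu.1, fun h => huw h.symm⟩
      have hbig := closure_cK_union_big hm hA hW2 h2 ?_
      · rw [hbig]
        apply cK_mono
        rw [← hcover]
        intro x hx
        rcases hx with hx | hx
        · exact Or.inl (Or.inr hx)
        · exact Or.inr hx
      · have : insert w V₀ ⊆ insert w V₁ ∩ V₂ := by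
          intro x hx
          rcases hx with rfl | hx
          · exact ⟨Or.inl rfl, hw.1⟩
          · exact ⟨Or.inr hx.1, hx.2⟩
        calc m = (insert w V₀).ncard := by
              rw [Set.ncard_insert_of_notMem hwV₀ (Set.toFinite _), hint]; omega
          _ ≤ _ := Set.ncard_le_ncard this (Set.toFinite _)
    · push_neg at h2
      have hc2 : V₂ = {w} := by
        have hw2 : w ∈ V₂ := hw.1
        have : V₂.ncard = 1 := by
          have : 0 < V₂.ncard := (Set.ncard_pos (Set.toFinite _)).2 ⟨w, hw2⟩
          omega
        obtain ⟨a, ha⟩ := Set.ncard_eq_one.mp this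
        rw [ha]; rw [ha] at hw2; simp_all
      have huniv : insert w V₁ = univ := by
        apply eq_univ_of_univ_subset
        rw [← hcover, hc2]
        intro x hx
        rcases hx with hx | hx
        · exact Or.inr hx
        · exact Or.inl hx
      rw [huniv]
      exact (subset_union_left).trans <| A.subset_closure _
        (union_subset (hA.1 ▸ cK_mono (subset_univ _)) (hA.1 ▸ cK_mono (subset_univ _)))
  -- combine
  set H := cK V₁ ∪ cK V₂ ∪ {s(u, w)} with hH
  have hHE : H ⊆ A.E := by
    rw [hA.1]
    refine union_subset (union_subset (cK_mono (subset_univ _)) (cK_mono (subset_univ _))) ?_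
    simp only [singleton_subset_iff]
    exact mk_mem_cK huw (mem_univ u) (mem_univ w)
  have hstep1 : cK V₁ ∪ cK S ⊆ A.closure H :=
    (union_subset (subset_union_left.trans subset_union_left) hSsub).trans (A.subset_closure H hHE)
  have hstep2 : cK (insert w V₁) ∪ cK V₂ ⊆ A.closure H := by
    refine union_subset (hB.trans ?_) ?_
    · exact A.closure_subset_closure (union_subset (subset_union_left.trans subset_union_left)
        hSsub)
    · exact (subset_union_right.trans subset_union_left).trans (A.subset_closure H hHE)
  exact hC.trans <| (A.closure_subset_closure hstep2).trans (subset_of_eq (A.closure_closure H))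

end ARM2

theorem stmt_15 {V : Type*} [Fintype V] [DecidableEq V] (m : ℕ) (hm : 0 < m)
    (A : Matroid (Sym2 V)) (hA : IsARMOn m (univ : Set V) A)
    (hV : m + 1 ≤ Fintype.card V)
    (V₁ V₂ : Set V) (hcover : V₁ ∪ V₂ = univ) (hint : (V₁ ∩ V₂).ncard = m - 1)
    (h12 : ¬ V₁ ⊆ V₂) (h21 : ¬ V₂ ⊆ V₁) :
    A.IsHyperplane (cK V₁ ∪ cK V₂) := by
  obtain ⟨u, hu1, hu2⟩ := not_subset.mp h12
  obtain ⟨w, hw1, hw2⟩ := not_subset.mp h21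
  have hu : u ∈ V₁ \ V₂ := ⟨hu1, hu2⟩
  have hw : w ∈ V₂ \ V₁ := ⟨hw1, hw2⟩
  have huw : u ≠ w := fun h => hu2 (h ▸ hw1)
  have hHE : cK V₁ ∪ cK V₂ ⊆ A.E :=
    union_subset (hA.1 ▸ cK_mono (subset_univ _)) (hA.1 ▸ cK_mono (subset_univ _))
  have hclH : A.closure (cK V₁ ∪ cK V₂) ⊆ cK V₁ ∪ cK V₂ :=
    closure_cK_union_small hm hA (by rw [hint]; omega)
  have hnotin : s(u, w) ∉ cK V₁ ∪ cK V₂ := by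
    rintro (h | h)
    · exact hw2 (h.2 w (by simp))
    · exact hu2 (h.2 u (by simp))
  refine ⟨hHE, ?_, ?_⟩
  · rintro ⟨B, hBH, hB⟩
    have h1 : A.E ⊆ cK V₁ ∪ cK V₂ := by
      rw [← hB.closure_eq]
      exact (A.closure_subset_closure hBH).trans hclH
    exact hnotin (h1 (hA.1 ▸ mk_mem_cK huw (mem_univ u) (mem_univ w)))
  · intro H' hss hsub
    obtain ⟨f, hfH', hfH⟩ := exists_of_ssubset hss
    have hfE : f ∈ cK (univ : Set V) := hA.1 ▸ hsub hfH'
    obtain ⟨a, b⟩ := f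
    have hab : a ≠ b := by simpa [Sym2.mk_isDiag_iff] using hfE.1
    have h1 : a ∉ V₁ ∨ b ∉ V₁ := by
      by_contra h; push_neg at h
      exact hfH (Or.inl (mk_mem_cK hab h.1 h.2))
    have h2 : a ∉ V₂ ∨ b ∉ V₂ := by
      by_contra h; push_neg at h
      exact hfH (Or.inr (mk_mem_cK hab h.1 h.2))
    have hmem : ∀ x : V, x ∉ V₁ → x ∈ V₂ := by
      intro x hx
      rcases (hcover ▸ mem_univ x : x ∈ V₁ ∪ V₂) with h | h
      · exact absurd h hx
      · exact h
    have hmem' : ∀ x : V, x ∉ V₂ → x ∈ V₁ := by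
      intro x hx
      rcases (hcover ▸ mem_univ x : x ∈ V₁ ∪ V₂) with h | h
      · exact h
      · exact absurd h hx
    have hspan : cK (univ : Set V) ⊆ A.closure (cK V₁ ∪ cK V₂ ∪ {s(a, b)}) := by
      rcases h1 with ha1 | hb1 <;> rcases h2 with ha2 | hb2
      · exact absurd (hmem a ha1) ha2
      · have := spanning_extra hm hA hcover hint ⟨hmem' b hb2, hb2⟩ ⟨hmem a ha1, ha1⟩
        rwa [Sym2.eq_swap] at this
      · exact spanning_extra hm hA hcover hint ⟨hmem' a ha2, ha2⟩ ⟨hmem b hb1, hb1⟩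
      · exact absurd (hmem b hb1) hb2
    have hsub' : cK V₁ ∪ cK V₂ ∪ {s(a, b)} ⊆ H' := by
      refine union_subset (subset_of_ssubset hss) ?_
      simpa using hfH'
    have hspanH' : A.Spanning H' := by
      rw [Matroid.spanning_iff_closure_eq hsub]
      refine subset_antisymm (A.closure_subset_ground H') ?_
      rw [hA.1]
      exact hspan.trans (A.closure_subset_closure hsub')
    obtain ⟨B, hB, hBH'⟩ := hspanH'.exists_isBase_subset
    exact ⟨B, hBH', hB⟩
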